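/- Let f(x,y) = Σ_{i≥0} Σ_{j≥0} a_{i,j} x^i y^j be a double power series absolutely convergent for |x|,|y| ≤ R. Fix x₀, y₀ with |x₀| < R², |y₀| < R, and |x₀ y₀/y'| ≤ R for all y' on the circle C of radius R' with |y₀| < R' ≤ R. Then the partial generating function f^≤(x₀,y₀) = Σ_{i≥0} Σ_{j≥i} a_{i,j} x₀^i y₀^j satisfies f^≤(x₀,y₀) = (1/(2πi)) ∮_{C} f(x₀y₀/y, y)/(y − y₀) dy, where C is a circle centred at the origin of radius R' with |y₀| < R' and |x₀ y₀|/R' within the radius of convergence of the first argument. -/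

import Mathlib

open Complex

open Metric MeasureTheory

lemma cauchy_pow (R' : ℝ) (y₀ : ℂ) (h : ‖y₀‖ < R') (n : ℕ) :
    (∮ y in C(0, R'), y ^ n / (y - y₀)) = 2 * Real.pi * I * y₀ ^ n := by
  have hd : DiffContOnCl ℂ (fun z : ℂ => z ^ n) (ball 0 R') :=
    (differentiable_pow n).diffContOnCl
  have hm : y₀ ∈ ball (0:ℂ) R' := by simpa [mem_ball_zero_iff] using h
  calc (∮ y in C(0, R'), y ^ n / (y - y₀))
      = ∮ y in C(0, R'), (y - y₀)⁻¹ • (y ^ n) := by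
        congr 1; funext y; rw [smul_eq_mul, div_eq_mul_inv, mul_comm]
    _ = (2 * Real.pi * I : ℂ) • y₀ ^ n := hd.circleIntegral_sub_inv_smul hm
    _ = 2 * Real.pi * I * y₀ ^ n := smul_eq_mul ..

lemma circint_inv_pow (R' : ℝ) (k : ℕ) (hk : k ≠ 1) :
    (∮ y in C(0, R'), (y ^ k)⁻¹) = 0 := by
  have : (fun y : ℂ => (y ^ k)⁻¹) = fun y : ℂ => (y - 0) ^ (-(k:ℤ)) := by
    funext y; rw [sub_zero, zpow_neg, zpow_natCast]
  rw [this, circleIntegral.integral_sub_zpow_of_ne (by omega) 0 0 R']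

lemma cauchy_inv_pow (R' : ℝ) (y₀ : ℂ) (h : ‖y₀‖ < R') (hR' : 0 < R') (k : ℕ) :
    (∮ y in C(0, R'), (y ^ (k+1))⁻¹ / (y - y₀)) = 0 := by
  rcases eq_or_ne y₀ 0 with rfl | hy₀
  · have : (fun y : ℂ => (y ^ (k+1))⁻¹ / (y - 0)) = fun y : ℂ => (y - 0) ^ (-((k:ℤ)+2)) := by
      funext y
      rw [sub_zero, div_eq_mul_inv, ← mul_inv, ← pow_succ,
        show (-((k:ℤ)+2)) = -((k+2 : ℕ) : ℤ) by push_cast; ring, zpow_neg, zpow_natCast]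
    rw [this, circleIntegral.integral_sub_zpow_of_ne (by omega) 0 0 R']
  have hsph : ∀ y ∈ sphere (0:ℂ) R', y ≠ 0 ∧ y - y₀ ≠ 0 := by
    intro y hy
    rw [mem_sphere_zero_iff_norm] at hy
    refine ⟨fun h0 => ?_, fun h0 => ?_⟩
    · rw [h0, norm_zero] at hy; exact hR'.ne hy
    · rw [sub_eq_zero.mp h0] at hy; exact absurd hy (ne_of_lt h)
  have hci : ∀ m : ℕ, CircleIntegrable (fun y : ℂ => (y ^ m)⁻¹ / (y - y₀)) 0 R' := by
    intro m
    apply ContinuousOn.circleIntegrable hR'.le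
    exact ContinuousOn.div
      ((continuousOn_pow m).inv₀ (fun y hy => pow_ne_zero _ (hsph y hy).1))
      (continuousOn_id.sub continuousOn_const) (fun y hy => (hsph y hy).2)
  have hci2 : ∀ m : ℕ, CircleIntegrable (fun y : ℂ => (y ^ m)⁻¹) 0 R' := fun m =>
    ContinuousOn.circleIntegrable hR'.le
      ((continuousOn_pow m).inv₀ (fun y hy => pow_ne_zero _ (hsph y hy).1))
  have step : ∀ m : ℕ, (∮ y in C(0, R'), (y ^ (m+1))⁻¹ / (y - y₀)) =
      y₀⁻¹ * ((∮ y in C(0, R'), (y ^ m)⁻¹ / (y - y₀)) - ∮ y in C(0, R'), (y ^ (m+1))⁻¹) := by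
    intro m
    rw [← circleIntegral.integral_sub (hci m) (hci2 (m+1)), ← smul_eq_mul,
      ← circleIntegral.integral_smul]
    apply circleIntegral.integral_congr hR'.le
    intro y hy
    obtain ⟨h1, h2⟩ := hsph y hy
    show (y ^ (m+1))⁻¹ / (y - y₀) = y₀⁻¹ • ((y ^ m)⁻¹ / (y - y₀) - (y ^ (m+1))⁻¹)
    rw [smul_eq_mul]
    have key : (y ^ m)⁻¹ / (y - y₀) - (y ^ (m+1))⁻¹ = y₀ * ((y ^ (m+1))⁻¹ / (y - y₀)) := by
      simp only [inv_eq_one_div]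
      rw [div_div, div_sub_div _ _ (mul_ne_zero (pow_ne_zero _ h1) h2) (pow_ne_zero _ h1),
        div_div, mul_comm y₀]
      rw [div_mul_eq_mul_div, div_eq_div_iff
        (mul_ne_zero (mul_ne_zero (pow_ne_zero _ h1) h2) (pow_ne_zero _ h1))
        (mul_ne_zero (pow_ne_zero _ h1) h2)]
      ring
    rw [key, ← mul_assoc, inv_mul_cancel₀ hy₀, one_mul]
  induction k with
  | zero =>
    rw [step 0]
    have h1 : (∮ y in C(0, R'), (y ^ 0)⁻¹ / (y - y₀)) = 2 * Real.pi * I := by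
      have : (fun y : ℂ => (y ^ 0)⁻¹ / (y - y₀)) = fun y : ℂ => (y - y₀)⁻¹ := by
        funext y; simp [div_eq_mul_inv]
      rw [this, circleIntegral.integral_sub_inv_of_mem_ball (by simpa [mem_ball_zero_iff] using h)]
    have h2 : (∮ y in C(0, R'), (y ^ 1)⁻¹) = 2 * Real.pi * I := by
      have : (fun y : ℂ => (y ^ 1)⁻¹) = fun y : ℂ => (y - 0)⁻¹ := by
        funext y; simp
      rw [this, circleIntegral.integral_sub_inv_of_mem_ball
        (by simpa [mem_ball_zero_iff] using hR')]
    rw [h1, h2, sub_self, mul_zero]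
  | succ n ih =>
    rw [step (n+1), ih, circint_inv_pow R' (n+2) (by omega), sub_self, mul_zero]

lemma term_eval (R' : ℝ) (hR' : 0 < R') (y₀ c w : ℂ) (h : ‖y₀‖ < R') (i j : ℕ) :
    (∮ y in C(0, R'), c * (w / y) ^ i * y ^ j / (y - y₀)) =
      if i ≤ j then 2 * Real.pi * I * (c * w ^ i * y₀ ^ (j - i)) else 0 := by
  have hy : ∀ y ∈ sphere (0:ℂ) R', y ≠ 0 := by
    intro y hy h0
    rw [mem_sphere_zero_iff_norm, h0, norm_zero] at hy
    exact hR'.ne hy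
  by_cases hij : i ≤ j
  · rw [if_pos hij]
    have congr1 : (∮ y in C(0, R'), c * (w / y) ^ i * y ^ j / (y - y₀)) =
        ∮ y in C(0, R'), (c * w ^ i) • (y ^ (j - i) / (y - y₀)) := by
      apply circleIntegral.integral_congr hR'.le
      intro y hy'
      have h0 := hy y hy'
      show c * (w / y) ^ i * y ^ j / (y - y₀) = (c * w ^ i) • (y ^ (j - i) / (y - y₀))
      have e1 : (w / y) ^ i * y ^ j = w ^ i * y ^ (j - i) := by
        rw [div_pow, pow_sub₀ y h0 hij]; ring
      rw [smul_eq_mul, mul_assoc c, e1, ← mul_assoc, mul_div_assoc]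
    rw [congr1, circleIntegral.integral_smul, smul_eq_mul, cauchy_pow R' y₀ h]
    ring
  · rw [if_neg hij]
    push_neg at hij
    have hk : i - j = (i - j - 1) + 1 := by omega
    have congr1 : (∮ y in C(0, R'), c * (w / y) ^ i * y ^ j / (y - y₀)) =
        ∮ y in C(0, R'), (c * w ^ i) • ((y ^ ((i - j - 1) + 1))⁻¹ / (y - y₀)) := by
      apply circleIntegral.integral_congr hR'.le
      intro y hy'
      have h0 := hy y hy'
      show c * (w / y) ^ i * y ^ j / (y - y₀) = (c * w ^ i) • ((y ^ ((i - j - 1) + 1))⁻¹ / (y - y₀))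
      have e1 : (w / y) ^ i * y ^ j = w ^ i * (y ^ (i - j))⁻¹ := by
        rw [div_pow, pow_sub₀ y h0 hij.le, mul_inv, inv_inv]; ring
      rw [smul_eq_mul, ← hk, mul_assoc c, e1, ← mul_assoc, mul_div_assoc]
    rw [congr1, circleIntegral.integral_smul, cauchy_inv_pow R' y₀ h hR', smul_zero]


/-- Cauchy-integral representation of the partial generating function f^≤. -/
theorem stmt_6 (R : ℝ) (hR : 0 < R) (a : ℕ → ℕ → ℂ)
    (hconv : ∀ x y : ℂ, ‖x‖ ≤ R → ‖y‖ ≤ R →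
      Summable (fun p : ℕ × ℕ => ‖a p.1 p.2‖ * ‖x‖ ^ p.1 * ‖y‖ ^ p.2))
    (x₀ y₀ : ℂ) (hx₀ : ‖x₀‖ < R ^ 2) (hy₀ : ‖y₀‖ < R)
    (R' : ℝ) (hR'₁ : ‖y₀‖ < R') (hR'₂ : R' ≤ R) (hxy : ‖x₀ * y₀‖ ≤ R * R') :
    (∑' p : ℕ × ℕ, if p.1 ≤ p.2 then a p.1 p.2 * x₀ ^ p.1 * y₀ ^ p.2 else 0) =
      (1 / (2 * Real.pi * I)) *
        ∮ y in C(0, R'),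
          (∑' p : ℕ × ℕ, a p.1 p.2 * (x₀ * y₀ / y) ^ p.1 * y ^ p.2) / (y - y₀) := by
  have hR'pos : 0 < R' := lt_of_le_of_lt (norm_nonneg _) hR'₁
  set w : ℂ := x₀ * y₀ with hw
  set r : ℝ := ‖w‖ / R' with hrdef
  have hr0 : 0 ≤ r := div_nonneg (norm_nonneg _) hR'pos.le
  have hrR : r ≤ R := (div_le_iff₀ hR'pos).2 hxy
  -- base summability
  have hS : Summable (fun p : ℕ × ℕ => ‖a p.1 p.2‖ * r ^ p.1 * R' ^ p.2) := by
    have := hconv (r : ℂ) (R' : ℂ)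
      (by rw [Complex.norm_real, Real.norm_eq_abs, _root_.abs_of_nonneg hr0]; exact hrR)
      (by rw [Complex.norm_real, Real.norm_eq_abs, _root_.abs_of_nonneg hR'pos.le]; exact hR'₂)
    simpa [Complex.norm_real, Real.norm_eq_abs, _root_.abs_of_nonneg hr0, _root_.abs_of_nonneg hR'pos.le]
      using this
  -- properties of the circle map
  have hym : ∀ θ : ℝ, ‖circleMap 0 R' θ‖ = R' := fun θ => by
    rw [norm_circleMap_zero, abs_of_pos hR'pos]
  have hyne : ∀ θ : ℝ, circleMap 0 R' θ ≠ 0 := fun θ => circleMap_ne_center hR'pos.ne'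
  have hsubne : ∀ θ : ℝ, circleMap 0 R' θ - y₀ ≠ 0 := fun θ => sub_ne_zero.2 fun e => by
    rw [← e] at hR'₁; rw [hym θ] at hR'₁; exact lt_irrefl _ hR'₁
  have hsub_lb : ∀ θ : ℝ, R' - ‖y₀‖ ≤ ‖circleMap 0 R' θ - y₀‖ := fun θ => by
    have := norm_sub_norm_le (circleMap 0 R' θ) y₀
    rw [hym θ] at this; linarith
  have hd : 0 < R' - ‖y₀‖ := by linarith
  -- the term functions on the circle parametrization
  set F : ℕ × ℕ → ℝ → ℂ := fun p θ =>
    (circleMap 0 R' θ * I) *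
      (a p.1 p.2 * (w / circleMap 0 R' θ) ^ p.1 * (circleMap 0 R' θ) ^ p.2 /
        (circleMap 0 R' θ - y₀)) with hF
  -- continuity / integrability of each term
  have hcont : ∀ p : ℕ × ℕ, Continuous (F p) := by
    intro p
    apply Continuous.mul ((continuous_circleMap 0 R').mul continuous_const)
    apply Continuous.div
    · exact (continuous_const.mul
        ((continuous_const.div (continuous_circleMap 0 R') hyne).pow p.1)).mul
        ((continuous_circleMap 0 R').pow p.2)
    · exact (continuous_circleMap 0 R').sub continuous_const
    · exact hsubne
  have hint : ∀ p : ℕ × ℕ, Integrable (F p) (volume.restrict (Set.Icc 0 (2 * Real.pi))) := by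
    intro p
    rw [← IntegrableOn]
    exact (hcont p).integrableOn_Icc
  -- norm bound
  set C1 : ℝ := R' * (R' - ‖y₀‖)⁻¹ with hC1
  have hbound : ∀ p : ℕ × ℕ, ∀ θ : ℝ,
      ‖F p θ‖ ≤ C1 * (‖a p.1 p.2‖ * r ^ p.1 * R' ^ p.2) := by
    intro p θ
    have h1 : ‖circleMap 0 R' θ * I‖ = R' := by
      rw [norm_mul, Complex.norm_I, mul_one, hym]
    have h2 : ‖(w / circleMap 0 R' θ) ^ p.1‖ = r ^ p.1 := by
      rw [norm_pow, norm_div, hym]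
    have h3 : ‖(circleMap 0 R' θ) ^ p.2‖ = R' ^ p.2 := by rw [norm_pow, hym]
    rw [hF]
    simp only [norm_mul, norm_div, h1]
    rw [norm_pow, norm_div, hym, norm_pow, hym]
    have hnum : 0 ≤ ‖a p.1 p.2‖ * r ^ p.1 * R' ^ p.2 := by positivity
    calc R' * (‖a p.1 p.2‖ * (‖w‖ / R') ^ p.1 * R' ^ p.2 / ‖circleMap 0 R' θ - y₀‖)
        ≤ R' * (‖a p.1 p.2‖ * (‖w‖ / R') ^ p.1 * R' ^ p.2 / (R' - ‖y₀‖)) := by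
          apply mul_le_mul_of_nonneg_left _ hR'pos.le
          exact div_le_div_of_nonneg_left hnum hd (hsub_lb θ)
      _ = C1 * (‖a p.1 p.2‖ * r ^ p.1 * R' ^ p.2) := by
          rw [hC1, hrdef, div_eq_mul_inv _ (R' - ‖y₀‖)]; ring
  -- interchange
  have hswap : (∫ θ in Set.Icc 0 (2 * Real.pi), ∑' p : ℕ × ℕ, F p θ) =
      ∑' p : ℕ × ℕ, ∫ θ in Set.Icc 0 (2 * Real.pi), F p θ := by
    refine (integral_tsum_of_summable_integral_norm hint ?_).symm
    apply Summable.of_nonneg_of_le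
      (fun p => integral_nonneg fun θ => norm_nonneg _)
      (fun p => ?_)
      (((hS.mul_left C1).mul_right ((volume (Set.Icc (0:ℝ) (2 * Real.pi))).toReal)))
    calc (∫ θ in Set.Icc 0 (2 * Real.pi), ‖F p θ‖)
        ≤ ‖∫ θ in Set.Icc 0 (2 * Real.pi), ‖F p θ‖‖ := le_abs_self _
      _ ≤ (C1 * (‖a p.1 p.2‖ * r ^ p.1 * R' ^ p.2)) *
          (volume (Set.Icc (0:ℝ) (2 * Real.pi))).toReal := by
          apply norm_setIntegral_le_of_norm_le_const measure_Icc_lt_top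
          intro θ _
          rw [Real.norm_eq_abs, _root_.abs_of_nonneg (norm_nonneg _)]
          exact hbound p θ
  -- rewrite the RHS circle integral as the Icc integral of the tsum
  have hrhs : (∮ y in C(0, R'),
      (∑' p : ℕ × ℕ, a p.1 p.2 * (x₀ * y₀ / y) ^ p.1 * y ^ p.2) / (y - y₀)) =
      ∫ θ in Set.Icc 0 (2 * Real.pi), ∑' p : ℕ × ℕ, F p θ := by
    rw [circleIntegral_def_Icc]
    apply setIntegral_congr_fun measurableSet_Icc
    intro θ _
    simp only [deriv_circleMap, smul_eq_mul]
    rw [← tsum_div_const, ← tsum_mul_left]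
  -- evaluate each term integral
  have hterm : ∀ p : ℕ × ℕ, (∫ θ in Set.Icc 0 (2 * Real.pi), F p θ) =
      if p.1 ≤ p.2 then 2 * Real.pi * I * (a p.1 p.2 * x₀ ^ p.1 * y₀ ^ p.2) else 0 := by
    intro p
    have : (∫ θ in Set.Icc 0 (2 * Real.pi), F p θ) =
        ∮ y in C(0, R'), a p.1 p.2 * (w / y) ^ p.1 * y ^ p.2 / (y - y₀) := by
      rw [circleIntegral_def_Icc]
      apply setIntegral_congr_fun measurableSet_Icc
      intro θ _
      simp only [deriv_circleMap, smul_eq_mul]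
      rfl
    rw [this, term_eval R' hR'pos y₀ _ w hR'₁ p.1 p.2]
    by_cases hij : p.1 ≤ p.2
    · rw [if_pos hij, if_pos hij, hw]
      congr 1
      rw [mul_pow, mul_assoc, mul_assoc, mul_assoc]
      congr 2
      rw [← pow_add]
      congr 1
      omega
    · rw [if_neg hij, if_neg hij]
  -- put it together
  rw [hrhs, hswap, tsum_congr hterm]
  have : (∑' p : ℕ × ℕ,
      if p.1 ≤ p.2 then 2 * Real.pi * I * (a p.1 p.2 * x₀ ^ p.1 * y₀ ^ p.2) else 0) =
      (2 * Real.pi * I : ℂ) *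
        ∑' p : ℕ × ℕ, if p.1 ≤ p.2 then a p.1 p.2 * x₀ ^ p.1 * y₀ ^ p.2 else 0 := by
    rw [← tsum_mul_left]
    exact tsum_congr fun p => by by_cases hij : p.1 ≤ p.2 <;> simp [hij]
  rw [this, ← mul_assoc, one_div, inv_mul_cancel₀ two_pi_I_ne_zero, one_mul]
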